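/- Let E be a real inner product space and let r ≥ 1 be a real number. Then for all a, b ∈ E, ⟪‖a‖^(r−1) • a − ‖b‖^(r−1) • b, a − b⟫ ≥ 2^(1−r) · ‖a − b‖^(r+1). -/

import Mathlib

open scoped RealInnerProductSpace
open Real Set

private lemma rpow_succ {x t : ℝ} (hx : 0 ≤ x) (ht : 0 ≤ t) : x ^ (t + 1) = x ^ t * x := by
  rw [Real.rpow_add' hx (ne_of_gt (by linarith))]
  simp

-- superadditivity: u^p + v^p ≤ (u+v)^p for p ≥ 1
private lemma rpow_superadd {u v p : ℝ} (hu : 0 ≤ u) (hv : 0 ≤ v) (hp : 1 ≤ p) :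
    u ^ p + v ^ p ≤ (u + v) ^ p := by
  have hp0 : (0:ℝ) ≤ p - 1 := by linarith
  have huv : (0:ℝ) ≤ u + v := by linarith
  have h1 : u ^ p = u ^ (p-1) * u := by
    rw [← rpow_succ hu hp0]; ring_nf
  have h2 : v ^ p = v ^ (p-1) * v := by
    rw [← rpow_succ hv hp0]; ring_nf
  have h3 : (u+v) ^ p = (u+v) ^ (p-1) * (u+v) := by
    rw [← rpow_succ huv hp0]; ring_nf
  have h4 : u ^ (p-1) ≤ (u+v) ^ (p-1) := Real.rpow_le_rpow hu (by linarith) hp0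
  have h5 : v ^ (p-1) ≤ (u+v) ^ (p-1) := Real.rpow_le_rpow hv (by linarith) hp0
  rw [h1, h2, h3]
  nlinarith [Real.rpow_nonneg hu (p-1), Real.rpow_nonneg hv (p-1)]

-- convexity midpoint: 2^(-s) * (x+y)^(s+1) ≤ x^(s+1) + y^(s+1)
private lemma rpow_midpoint {x y s : ℝ} (hx : 0 ≤ x) (hy : 0 ≤ y) (hs : 0 ≤ s) :
    (2:ℝ) ^ (-s) * (x + y) ^ (s+1) ≤ x ^ (s+1) + y ^ (s+1) := by
  have hp : (1:ℝ) ≤ s + 1 := by linarith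
  have hconv := (convexOn_rpow hp).2 (mem_Ici.2 hx) (mem_Ici.2 hy)
    (by norm_num : (0:ℝ) ≤ 1/2) (by norm_num : (0:ℝ) ≤ 1/2) (by norm_num)
  simp only [smul_eq_mul] at hconv
  have h1 : ((1/2) * x + (1/2) * y) ^ (s+1) = (1/2 : ℝ) ^ (s+1) * (x+y) ^ (s+1) := by
    rw [show (1/2) * x + (1/2) * y = (1/2 : ℝ) * (x + y) by ring,
      Real.mul_rpow (by norm_num) (by linarith)]
  have h2 : ((1:ℝ)/2) ^ (s+1) = 2 ^ (-(s+1)) := by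
    rw [Real.rpow_neg (by norm_num), ← Real.inv_rpow (by norm_num)]
    norm_num
  have h3 : (2:ℝ) ^ (-s) = 2 * 2 ^ (-(s+1)) := by
    rw [show -s = 1 + -(s+1) by ring, Real.rpow_add (by norm_num)]
    simp
  rw [h1, h2] at hconv
  rw [h3]
  nlinarith [Real.rpow_nonneg (by linarith : (0:ℝ) ≤ x + y) (s+1)]

-- endpoint lemma for a concave (linear minus convex-power) function
private lemma endpoint_lemma {c k m q u₀ u₁ u : ℝ} (hq : 1 ≤ q) (hc : 0 ≤ c)
    (h0 : 0 ≤ u₀) (h01 : u₀ ≤ u) (h1 : u ≤ u₁)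
    (e0 : c * u₀ ^ q ≤ k * u₀ + m) (e1 : c * u₁ ^ q ≤ k * u₁ + m) :
    c * u ^ q ≤ k * u + m := by
  rcases eq_or_lt_of_le (h01.trans h1) with h | h
  · rcases le_antisymm h01 (h ▸ h1) with rfl; exact e0
  · set t : ℝ := (u - u₀) / (u₁ - u₀) with ht
    have hden : 0 < u₁ - u₀ := by linarith
    have ht0 : 0 ≤ t := div_nonneg (by linarith) hden.le
    have ht1 : t ≤ 1 := (div_le_one hden).2 (by linarith)
    have hu : u = (1 - t) * u₀ + t * u₁ := by
      rw [ht]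
      field_simp [hden.ne']
      ring
    have hconv := (convexOn_rpow hq).2 (mem_Ici.2 h0) (mem_Ici.2 (by linarith : (0:ℝ) ≤ u₁))
      (by linarith : (0:ℝ) ≤ 1 - t) ht0 (by ring)
    simp only [smul_eq_mul] at hconv
    rw [← hu] at hconv
    calc c * u ^ q ≤ c * ((1-t) * u₀ ^ q + t * u₁ ^ q) :=
          mul_le_mul_of_nonneg_left hconv hc
      _ = (1-t) * (c * u₀ ^ q) + t * (c * u₁ ^ q) := by ring
      _ ≤ (1-t) * (k * u₀ + m) + t * (k * u₁ + m) :=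
          add_le_add (mul_le_mul_of_nonneg_left e0 (by linarith))
            (mul_le_mul_of_nonneg_left e1 ht0)
      _ = k * ((1-t) * u₀ + t * u₁) + m := by ring
      _ = k * u + m := by rw [← hu]

-- key scalar lemma, assuming y ≤ x
private lemma key_aux {s x y d : ℝ} (hs : 0 ≤ s) (hy : 0 ≤ y) (hxy : y ≤ x)
    (hd0 : 0 ≤ d) (hd1 : x - y ≤ d) (hd2 : d ≤ x + y) :
    (2:ℝ) ^ (-s) * d ^ (s+2) ≤
      x ^ (s+2) + y ^ (s+2) - (x ^ s + y ^ s) * ((x^2 + y^2 - d^2)/2) := by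
  have hx : 0 ≤ x := hy.trans hxy
  have hq : (1:ℝ) ≤ (s+2)/2 := by linarith
  have hc : (0:ℝ) ≤ 2 ^ (-s) := Real.rpow_nonneg (by norm_num) _
  have sqpow : ∀ w : ℝ, 0 ≤ w → (w^2 : ℝ) ^ ((s+2)/2) = w ^ (s+2) := by
    intro w hw
    rw [← Real.rpow_natCast w 2, ← Real.rpow_mul hw]
    congr 1
    ring
  have e1 : x ^ (s+2) = x ^ (s+1) * x := by
    rw [show s+2 = (s+1) + 1 by ring, rpow_succ hx (by linarith)]
  have e2 : y ^ (s+2) = y ^ (s+1) * y := by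
    rw [show s+2 = (s+1) + 1 by ring, rpow_succ hy (by linarith)]
  have e4 : x ^ (s+1) = x ^ s * x := rpow_succ hx hs
  have e5 : y ^ (s+1) = y ^ s * y := rpow_succ hy hs
  have hgoal : (2:ℝ) ^ (-s) * (d^2) ^ ((s+2)/2) ≤
      (x ^ s + y ^ s)/2 * d^2 + (x ^ (s+2) + y ^ (s+2) - (x ^ s + y ^ s) * ((x^2 + y^2)/2)) := by
    refine endpoint_lemma (u₁ := (x+y)^2) hq hc (sq_nonneg (x - y)) ?_ ?_ ?_ ?_
    · nlinarith
    · nlinarith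
    · -- endpoint d = x - y
      rw [sqpow (x-y) (by linarith)]
      have hsup := rpow_superadd hy (show (0:ℝ) ≤ x - y by linarith)
        (show (1:ℝ) ≤ s+1 by linarith)
      rw [show y + (x - y) = x by ring] at hsup
      have h2s : (2:ℝ) ^ (-s) ≤ 1 := by
        rw [show (1:ℝ) = 2 ^ (0:ℝ) by simp]
        exact Real.rpow_le_rpow_of_exponent_le (by norm_num) (by linarith)
      have e3 : (x-y) ^ (s+2) = (x-y) ^ (s+1) * (x-y) := by
        rw [show s+2 = (s+1) + 1 by ring, rpow_succ (by linarith : (0:ℝ) ≤ x - y) (by linarith)]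
      calc (2:ℝ)^(-s) * ((x-y)^(s+2))
          ≤ 1 * ((x-y)^(s+1) * (x-y)) := by
            rw [e3]
            exact mul_le_mul_of_nonneg_right h2s
              (mul_nonneg (Real.rpow_nonneg (by linarith) _) (by linarith))
        _ = (x-y)^(s+1) * (x-y) := by ring
        _ ≤ (x ^ (s+1) - y ^ (s+1)) * (x - y) :=
            mul_le_mul_of_nonneg_right (by linarith) (by linarith)
        _ = (x ^ s + y ^ s)/2 * (x-y)^2 +
            (x ^ (s+2) + y ^ (s+2) - (x ^ s + y ^ s) * ((x^2 + y^2)/2)) := by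
            rw [e1, e2, e4, e5]; ring
    · -- endpoint d = x + y
      rw [sqpow (x+y) (by linarith)]
      have hmid := rpow_midpoint hx hy hs
      have e3 : (x+y) ^ (s+2) = (x+y) ^ (s+1) * (x+y) := by
        rw [show s+2 = (s+1) + 1 by ring, rpow_succ (by linarith : (0:ℝ) ≤ x + y) (by linarith)]
      calc (2:ℝ)^(-s) * ((x+y)^(s+2)) = (2:ℝ)^(-s) * (x+y)^(s+1) * (x+y) := by
            rw [e3]; ring
        _ ≤ (x^(s+1) + y^(s+1)) * (x+y) := mul_le_mul_of_nonneg_right hmid (by linarith)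
        _ = (x ^ s + y ^ s)/2 * (x+y)^2 +
            (x ^ (s+2) + y ^ (s+2) - (x ^ s + y ^ s) * ((x^2 + y^2)/2)) := by
            rw [e1, e2, e4, e5]; ring
  rw [sqpow d hd0] at hgoal
  linarith

private lemma key {s x y d : ℝ} (hs : 0 ≤ s) (hx : 0 ≤ x) (hy : 0 ≤ y)
    (hd0 : 0 ≤ d) (hd1 : |x - y| ≤ d) (hd2 : d ≤ x + y) :
    (2:ℝ) ^ (-s) * d ^ (s+2) ≤
      x ^ (s+2) + y ^ (s+2) - (x ^ s + y ^ s) * ((x^2 + y^2 - d^2)/2) := by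
  rcases le_total y x with h | h
  · exact key_aux hs hy h hd0 (by rwa [abs_of_nonneg (by linarith)] at hd1) hd2
  · have := key_aux hs hx h hd0 (by rwa [abs_sub_comm, abs_of_nonneg (by linarith)] at hd1)
      (by linarith)
    linarith

/-- Pointwise form of the coercive monotonicity estimate (214). -/
theorem forchheimer_coercive_monotonicity
    {E : Type*} [NormedAddCommGroup E] [InnerProductSpace ℝ E]
    (r : ℝ) (hr : 1 ≤ r) (a b : E) :
    ⟪‖a‖ ^ (r - 1) • a - ‖b‖ ^ (r - 1) • b, a - b⟫ ≥
      (2 : ℝ) ^ (1 - r) * ‖a - b‖ ^ (r + 1) := by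
  set x := ‖a‖
  set y := ‖b‖
  set d := ‖a - b‖
  have hx : 0 ≤ x := norm_nonneg a
  have hy : 0 ≤ y := norm_nonneg b
  have hd0 : 0 ≤ d := norm_nonneg _
  have hs : 0 ≤ r - 1 := by linarith
  have hip : ⟪a, b⟫ = (x^2 + y^2 - d^2)/2 := by
    have := norm_sub_sq_real a b
    simp only [x, y, d] at *
    linarith
  have hexp : ⟪‖a‖ ^ (r - 1) • a - ‖b‖ ^ (r - 1) • b, a - b⟫ =
      x ^ (r-1) * x^2 + y ^ (r-1) * y^2 - (x ^ (r-1) + y ^ (r-1)) * ⟪a, b⟫ := by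
    simp only [inner_sub_left, inner_sub_right, real_inner_smul_left,
      real_inner_self_eq_norm_sq, real_inner_comm b a]
    ring
  have hpx : x ^ (r-1) * x^2 = x ^ (r+1) := by
    rw [← Real.rpow_natCast x 2, ← Real.rpow_add' hx (by norm_num; linarith)]
    congr 1
    push_cast
    ring
  have hpy : y ^ (r-1) * y^2 = y ^ (r+1) := by
    rw [← Real.rpow_natCast y 2, ← Real.rpow_add' hy (by norm_num; linarith)]
    congr 1
    push_cast
    ring
  have hk := key hs hx hy hd0 (abs_norm_sub_norm_le a b) (norm_sub_le a b)
  rw [ge_iff_le, hexp, hip, hpx, hpy]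
  have h1 : r - 1 + 2 = r + 1 := by ring
  have h2 : -(r-1) = 1 - r := by ring
  rw [h1, h2] at hk
  linarith
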